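/- If S ⊆ ℕ is decidable (ComputablePred (· ∈ S)) and nonempty, then there is a language capturing the safe-generator property: there exists a set L of codes with ComputablePred (· ∈ L) such that (i) every c ∈ L is a safe generator (∀ x y, y ∈ c.eval x → y ∈ S), and (ii) every code c that is a safe generator for S has some c' ∈ L with eval c' = eval c. -/

import Mathlib

open Nat.Partrec Nat.Partrec.Code

private theorem encode_comp_eq (cf cg : Code) :
    Encodable.encode (cf.comp cg) =
      2 * (2 * Nat.pair (Encodable.encode cf) (Encodable.encode cg) + 1) + 4 := by
  simp [encodeCode_eq, encodeCode]

theorem language_captures_safe_generators (S : Set ℕ) (hS : ComputablePred (· ∈ S))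
    (s : ℕ) (hs : s ∈ S) :
    ∃ L : Set Nat.Partrec.Code, ComputablePred (· ∈ L) ∧
      (∀ c ∈ L, ∀ x y, y ∈ c.eval x → y ∈ S) ∧
      (∀ c : Nat.Partrec.Code, (∀ x y, y ∈ c.eval x → y ∈ S) →
        ∃ c' ∈ L, c'.eval = c.eval) := by
  -- the filtering function
  obtain ⟨inst, hdec⟩ := hS
  letI inst' : DecidablePred (· ∈ S) := inst
  have hdec' : Computable fun y : ℕ => decide (y ∈ S) := hdec
  set g : ℕ → ℕ := fun y => if y ∈ S then y else s with hg
  have hgS : ∀ y, g y ∈ S := by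
    intro y; by_cases h : y ∈ S <;> simp [hg, h, hs]
  have hgid : ∀ y, y ∈ S → g y = y := by intro y h; simp [hg, h]
  have hgcomp : Computable g := by
    have : Computable fun y : ℕ => bif decide (y ∈ S) then y else s :=
      Computable.cond hdec' Computable.id (Computable.const s)
    convert this using 1
    funext y; by_cases h : y ∈ S <;> simp [hg, h]
  obtain ⟨f, hf⟩ : ∃ f : Code, f.eval = fun y => Part.some (g y) := by
    have : Nat.Partrec (fun y => Part.some (g y) : ℕ →. ℕ) :=
      Partrec.nat_iff.1 (Computable.partrec hgcomp)
    exact exists_code.1 this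
  have hcomp : ∀ (cg : Code) (x : ℕ), (f.comp cg).eval x = cg.eval x >>= f.eval :=
    fun _ _ => rfl
  -- the language
  refine ⟨{c | ∃ cg : Code, c = f.comp cg}, ?_, ?_, ?_⟩
  · -- decidability
    set P : ℕ → Prop := fun n => n % 2 = 0 ∧ 4 ≤ n ∧ ((n - 4) / 2) % 2 = 1 ∧
        (((n - 4) / 2 / 2).unpair.1 = Encodable.encode f) with hP
    have key : ∀ c : Code, (∃ cg : Code, c = f.comp cg) ↔ P (Encodable.encode c) := by
      intro c
      simp only [hP]
      constructor
      · rintro ⟨cg, rfl⟩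
        rw [encode_comp_eq]
        set m := Nat.pair (Encodable.encode f) (Encodable.encode cg)
        refine ⟨by omega, by omega, ?_, ?_⟩
        · have : 2 * (2 * m + 1) + 4 - 4 = 2 * (2 * m + 1) := by omega
          rw [this]; omega
        · have h1 : (2 * (2 * m + 1) + 4 - 4) / 2 / 2 = m := by omega
          rw [h1]; simp [m]
      · intro h
        obtain ⟨h1, h2, h3, h4⟩ := h
        cases c with
        | zero => simp [encodeCode_eq, encodeCode] at h2
        | succ => simp [encodeCode_eq, encodeCode] at h2
        | left => simp [encodeCode_eq, encodeCode] at h2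
        | right => simp [encodeCode_eq, encodeCode] at h2
        | pair cf cg =>
          exfalso
          simp only [encodeCode_eq, encodeCode] at h3
          set m := Nat.pair cf.encodeCode cg.encodeCode
          omega
        | comp cf cg =>
          refine ⟨cg, ?_⟩
          simp only [encodeCode_eq, encodeCode] at h4
          set m := Nat.pair cf.encodeCode cg.encodeCode with hm
          have hq : (2 * (2 * m + 1) + 4 - 4) / 2 / 2 = m := by omega
          rw [hq] at h4
          have hu : Nat.unpair m = (cf.encodeCode, cg.encodeCode) := by
            rw [hm]; exact Nat.unpair_pair _ _
          rw [hu] at h4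
          have hcf : cf = f := by
            apply Encodable.encode_injective
            rw [encodeCode_eq]; exact h4
          rw [hcf]
        | prec cf cg =>
          exfalso
          simp only [encodeCode_eq, encodeCode] at h1
          omega
        | rfind' cf =>
          exfalso
          simp only [encodeCode_eq, encodeCode] at h1
          omega
    rw [ComputablePred.computable_iff]
    refine ⟨fun c => decide (P (Encodable.encode c)), ?_, ?_⟩
    · have hPr : PrimrecPred P := by
        simp only [hP]
        apply PrimrecPred.and
        · exact Primrec.eq.comp ((Primrec.nat_mod).comp Primrec.id (Primrec.const 2))
            (Primrec.const 0)
        apply PrimrecPred.and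
        · exact Primrec.nat_le.comp (Primrec.const 4) Primrec.id
        apply PrimrecPred.and
        · exact Primrec.eq.comp
            ((Primrec.nat_mod).comp
              ((Primrec.nat_div).comp (Primrec.nat_sub.comp Primrec.id (Primrec.const 4))
                (Primrec.const 2)) (Primrec.const 2)) (Primrec.const 1)
        · exact Primrec.eq.comp
            (Primrec.fst.comp (Primrec.unpair.comp
              ((Primrec.nat_div).comp
                ((Primrec.nat_div).comp (Primrec.nat_sub.comp Primrec.id (Primrec.const 4))
                  (Primrec.const 2)) (Primrec.const 2))))
            (Primrec.const (Encodable.encode f))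
      exact (hPr.comp Primrec.encode).decide.to_comp
    · funext c
      simp only [Set.mem_setOf_eq]
      rw [key c]
      exact (decide_eq_true_eq).symm
  · -- safety
    rintro c ⟨cg, rfl⟩ x y hy
    rw [hcomp] at hy
    obtain ⟨z, _, hz2⟩ := Part.mem_bind_iff.1 hy
    rw [hf] at hz2
    simp only [Part.mem_some_iff] at hz2
    rw [hz2]; exact hgS z
  · -- completeness
    intro c hc
    refine ⟨f.comp c, ⟨c, rfl⟩, ?_⟩
    funext x
    rw [hcomp]
    apply Part.ext; intro y
    constructor
    · intro hy
      obtain ⟨z, hz1, hz2⟩ := Part.mem_bind_iff.1 hy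
      rw [hf] at hz2
      simp only [Part.mem_some_iff] at hz2
      rw [hz2, hgid z (hc x z hz1)]; exact hz1
    · intro hy
      refine Part.mem_bind_iff.2 ⟨y, hy, ?_⟩
      rw [hf]
      simp [hgid y (hc x y hy)]
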